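/- Deterministic covering form of the generic list-decodable mean estimation upper bound (Proposition on minimax error upper bounds): Let n be a positive integer, let α ∈ (0, 1/2), let u > 0, and let T be a finite nonempty subset of ℝⁿ. Then there exists a finite set F ⊆ ℝⁿ with |F| ≤ 5/α such that the following holds: for every μ ∈ ℝⁿ for which there exists a subset S ⊆ T with |S| ≥ α·|T| and with the property that for every unit vector v ∈ ℝⁿ the number of points x ∈ S with |⟨v, x − μ⟩| ≥ u is at most (α/10)·|S|, there exists f ∈ F with ‖f − μ‖₂ ≤ 2u. -/

import Mathlib

open Finset MeasureTheory
open scoped RealInnerProductSpace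

open Classical in
private def IsGood {n : ℕ} (α u : ℝ) (T : Finset (EuclideanSpace ℝ (Fin n)))
    (μ : EuclideanSpace ℝ (Fin n)) : Prop :=
  ∃ S ⊆ T, α * (T.card : ℝ) ≤ (S.card : ℝ) ∧
    ∀ v : EuclideanSpace ℝ (Fin n), ‖v‖ = 1 →
      ((S.filter fun x => u ≤ |(inner ℝ v (x - μ) : ℝ)|).card : ℝ) ≤ (α / 10) * (S.card : ℝ)

open Classical in
private lemma pair_bound {n : ℕ} {α u : ℝ} (hu : 0 < u)
    {μ μ' : EuclideanSpace ℝ (Fin n)} {S S' : Finset (EuclideanSpace ℝ (Fin n))}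
    (hS : ∀ v : EuclideanSpace ℝ (Fin n), ‖v‖ = 1 →
      ((S.filter fun x => u ≤ |(inner ℝ v (x - μ) : ℝ)|).card : ℝ) ≤ (α / 10) * (S.card : ℝ))
    (hS' : ∀ v : EuclideanSpace ℝ (Fin n), ‖v‖ = 1 →
      ((S'.filter fun x => u ≤ |(inner ℝ v (x - μ') : ℝ)|).card : ℝ) ≤ (α / 10) * (S'.card : ℝ))
    (hd : 2 * u ≤ ‖μ - μ'‖) :
    ((S ∩ S').card : ℝ) ≤ (α / 10) * (S.card : ℝ) + (α / 10) * (S'.card : ℝ) := by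
  have hne : μ' - μ ≠ 0 := by
    intro h
    have : μ - μ' = 0 := by
      have := congrArg Neg.neg h; simpa [neg_sub] using this
    rw [this, norm_zero] at hd; linarith
  set v : EuclideanSpace ℝ (Fin n) := ‖μ' - μ‖⁻¹ • (μ' - μ) with hv
  have hvnorm : ‖v‖ = 1 := norm_smul_inv_norm hne
  have hinner : (inner ℝ v (μ' - μ) : ℝ) = ‖μ' - μ‖ := by
    rw [hv, real_inner_smul_left, real_inner_self_eq_norm_mul_norm]
    field_simp
  have key : ∀ x ∈ S ∩ S', u ≤ |(inner ℝ v (x - μ) : ℝ)| ∨ u ≤ |(inner ℝ v (x - μ') : ℝ)| := by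
    intro x _
    by_contra hcon
    push_neg at hcon
    obtain ⟨h1, h2⟩ := hcon
    have hdiff : (inner ℝ v (x - μ) : ℝ) - (inner ℝ v (x - μ') : ℝ) = ‖μ' - μ‖ := by
      rw [← inner_sub_right, ← hinner]
      congr 1
      abel
    have : ‖μ' - μ‖ < 2 * u := by
      calc ‖μ' - μ‖ = (inner ℝ v (x - μ) : ℝ) - (inner ℝ v (x - μ') : ℝ) := hdiff.symm
        _ ≤ |(inner ℝ v (x - μ) : ℝ)| + |(inner ℝ v (x - μ') : ℝ)| := by
            have := abs_sub (inner ℝ v (x - μ) : ℝ) (inner ℝ v (x - μ') : ℝ)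
            calc (inner ℝ v (x - μ) : ℝ) - (inner ℝ v (x - μ') : ℝ)
                ≤ |(inner ℝ v (x - μ) : ℝ) - (inner ℝ v (x - μ') : ℝ)| := le_abs_self _
              _ ≤ |(inner ℝ v (x - μ) : ℝ)| + |(inner ℝ v (x - μ') : ℝ)| := abs_sub _ _
        _ < u + u := by linarith
        _ = 2 * u := by ring
    rw [norm_sub_rev] at hd
    linarith
  have hsub : S ∩ S' ⊆ (S.filter fun x => u ≤ |(inner ℝ v (x - μ) : ℝ)|) ∪
      (S'.filter fun x => u ≤ |(inner ℝ v (x - μ') : ℝ)|) := by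
    intro x hx
    rcases key x hx with h | h
    · exact Finset.mem_union_left _ (Finset.mem_filter.2 ⟨(Finset.mem_inter.1 hx).1, h⟩)
    · exact Finset.mem_union_right _ (Finset.mem_filter.2 ⟨(Finset.mem_inter.1 hx).2, h⟩)
  calc ((S ∩ S').card : ℝ)
      ≤ (((S.filter fun x => u ≤ |(inner ℝ v (x - μ) : ℝ)|) ∪
          (S'.filter fun x => u ≤ |(inner ℝ v (x - μ') : ℝ)|)).card : ℝ) := by
        exact_mod_cast Finset.card_le_card hsub
    _ ≤ ((S.filter fun x => u ≤ |(inner ℝ v (x - μ) : ℝ)|).card : ℝ) +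
        ((S'.filter fun x => u ≤ |(inner ℝ v (x - μ') : ℝ)|).card : ℝ) := by
        exact_mod_cast Finset.card_union_le _ _
    _ ≤ (α / 10) * (S.card : ℝ) + (α / 10) * (S'.card : ℝ) :=
        add_le_add (hS v hvnorm) (hS' v hvnorm)

open Classical in
private lemma sep_card {n : ℕ} {α u : ℝ} (hα0 : 0 < α) (hu : 0 < u)
    {T : Finset (EuclideanSpace ℝ (Fin n))} (hT : T.Nonempty)
    (F : Finset (EuclideanSpace ℝ (Fin n)))
    (hF : ∀ f ∈ F, IsGood α u T f)
    (hsep : ∀ f ∈ F, ∀ g ∈ F, f ≠ g → 2 * u ≤ ‖f - g‖) :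
    (F.card : ℝ) ≤ 5 / α := by
  rcases F.eq_empty_or_nonempty with rfl | hFne
  · simp; positivity
  -- choose certificate sets
  set Sf : EuclideanSpace ℝ (Fin n) → Finset (EuclideanSpace ℝ (Fin n)) :=
    fun f => if h : IsGood α u T f then h.choose else ∅ with hSf
  have hSfspec : ∀ f ∈ F, Sf f ⊆ T ∧ α * (T.card : ℝ) ≤ ((Sf f).card : ℝ) ∧
      ∀ v : EuclideanSpace ℝ (Fin n), ‖v‖ = 1 →
        (((Sf f).filter fun x => u ≤ |(inner ℝ v (x - f) : ℝ)|).card : ℝ) ≤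
          (α / 10) * ((Sf f).card : ℝ) := by
    intro f hf
    have h := hF f hf
    simp only [hSf, dif_pos h]
    exact ⟨h.choose_spec.1, h.choose_spec.2.1, h.choose_spec.2.2⟩
  set N : ℝ := (T.card : ℝ) with hN
  set k : ℝ := (F.card : ℝ) with hk
  have hN1 : (1 : ℝ) ≤ N := by
    rw [hN]; exact_mod_cast Nat.one_le_iff_ne_zero.2 (Finset.card_ne_zero.2 hT)
  set m : ℝ := ∑ f ∈ F, ((Sf f).card : ℝ) with hm
  have hm_ge : α * N * k ≤ m := by
    have : ∑ f ∈ F, α * N ≤ m := Finset.sum_le_sum fun f hf => (hSfspec f hf).2.1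
    simpa [mul_comm, mul_assoc, mul_left_comm] using this
  -- indicator counting
  set c : EuclideanSpace ℝ (Fin n) → ℝ := fun x => ∑ f ∈ F, (if x ∈ Sf f then (1:ℝ) else 0)
  have hsum_c : ∑ x ∈ T, c x = m := by
    rw [Finset.sum_comm]
    refine Finset.sum_congr rfl fun f hf => ?_
    rw [Finset.sum_boole, Finset.filter_mem_eq_inter,
      Finset.inter_eq_right.2 (hSfspec f hf).1]
  have hsum_c2 : ∑ x ∈ T, (c x) ^ 2 = ∑ f ∈ F, ∑ g ∈ F, (((Sf f) ∩ (Sf g)).card : ℝ) := by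
    have step : ∀ x, (c x) ^ 2 =
        ∑ f ∈ F, ∑ g ∈ F, (if x ∈ Sf f ∩ Sf g then (1:ℝ) else 0) := by
      intro x
      rw [sq, Finset.sum_mul_sum]
      refine Finset.sum_congr rfl fun f _ => Finset.sum_congr rfl fun g _ => ?_
      by_cases h1 : x ∈ Sf f <;> by_cases h2 : x ∈ Sf g <;>
        simp [h1, h2, Finset.mem_inter]
    rw [Finset.sum_congr rfl fun x _ => step x, Finset.sum_comm]
    refine Finset.sum_congr rfl fun f hf => ?_
    rw [Finset.sum_comm]
    refine Finset.sum_congr rfl fun g hg => ?_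
    rw [Finset.sum_boole, Finset.filter_mem_eq_inter, Finset.inter_eq_right.2]
    exact (Finset.inter_subset_left).trans (hSfspec f hf).1
  -- off-diagonal bound
  have hoff : ∑ f ∈ F, ∑ g ∈ F, (((Sf f) ∩ (Sf g)).card : ℝ) ≤
      m + (α / 5) * (k - 1) * m := by
    have split : ∀ f ∈ F, ∑ g ∈ F, (((Sf f) ∩ (Sf g)).card : ℝ) =
        ((Sf f).card : ℝ) + ∑ g ∈ F.erase f, (((Sf f) ∩ (Sf g)).card : ℝ) := by
      intro f hf
      rw [← Finset.add_sum_erase _ _ hf, Finset.inter_self]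
    calc ∑ f ∈ F, ∑ g ∈ F, (((Sf f) ∩ (Sf g)).card : ℝ)
        = ∑ f ∈ F, (((Sf f).card : ℝ) + ∑ g ∈ F.erase f, (((Sf f) ∩ (Sf g)).card : ℝ)) :=
          Finset.sum_congr rfl split
      _ = m + ∑ f ∈ F, ∑ g ∈ F.erase f, (((Sf f) ∩ (Sf g)).card : ℝ) := by
          rw [Finset.sum_add_distrib]
      _ ≤ m + ∑ f ∈ F, ∑ g ∈ F.erase f,
            ((α / 10) * ((Sf f).card : ℝ) + (α / 10) * ((Sf g).card : ℝ)) := by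
          gcongr with f hf g hg
          have hgF : g ∈ F := Finset.mem_of_mem_erase hg
          have hne : f ≠ g := (Finset.ne_of_mem_erase hg).symm
          exact pair_bound hu (hSfspec f hf).2.2 (hSfspec g hgF).2.2
            (hsep f hf g hgF hne)
      _ = m + (α / 5) * (k - 1) * m := by
          have e1 : ∀ f ∈ F, ∑ g ∈ F.erase f,
              ((α / 10) * ((Sf f).card : ℝ) + (α / 10) * ((Sf g).card : ℝ)) =
              (k - 1) * ((α / 10) * ((Sf f).card : ℝ)) +
              (α / 10) * (m - ((Sf f).card : ℝ)) := by
            intro f hf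
            rw [Finset.sum_add_distrib, Finset.sum_const, ← Finset.mul_sum]
            have hcard : ((F.erase f).card : ℝ) = k - 1 := by
              rw [Finset.card_erase_of_mem hf]
              have : 1 ≤ F.card := Finset.card_pos.2 hFne
              push_cast [Nat.cast_sub this]
              ring
            have hsum : ∑ g ∈ F.erase f, ((Sf g).card : ℝ) = m - ((Sf f).card : ℝ) := by
              rw [hm, ← Finset.add_sum_erase _ _ hf]; ring
            rw [hsum, nsmul_eq_mul, hcard]
          have h2 : ∑ f ∈ F, (m - ((Sf f).card : ℝ)) = k * m - m := by
            rw [Finset.sum_sub_distrib, Finset.sum_const, nsmul_eq_mul, ← hm, ← hk]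
          have hA : ∑ f ∈ F, ((k - 1) * ((α / 10) * ((Sf f).card : ℝ))) =
              (k - 1) * ((α / 10) * m) := by
            rw [hm, ← Finset.mul_sum, ← Finset.mul_sum]
          have hB : ∑ f ∈ F, ((α / 10) * (m - ((Sf f).card : ℝ))) =
              (α / 10) * (k * m - m) := by
            rw [← Finset.mul_sum, h2]
          rw [Finset.sum_congr rfl e1, Finset.sum_add_distrib, hA, hB]
          ring
  -- Cauchy–Schwarz
  have hCS : (∑ x ∈ T, c x) ^ 2 ≤ N * ∑ x ∈ T, (c x) ^ 2 := by
    have := sq_sum_le_card_mul_sum_sq (s := T) (f := c)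
    exact_mod_cast this
  have hm_pos : 0 < m := by
    have hk1 : (1:ℝ) ≤ k := by
      rw [hk]; exact_mod_cast Nat.one_le_iff_ne_zero.2 (Finset.card_ne_zero.2 hFne)
    have : 0 < α * N * k := mul_pos (mul_pos hα0 (by linarith)) (by linarith)
    linarith
  have hchain : m ^ 2 ≤ N * (m + (α / 5) * (k - 1) * m) := by
    calc m ^ 2 = (∑ x ∈ T, c x) ^ 2 := by rw [hsum_c]
      _ ≤ N * ∑ x ∈ T, (c x) ^ 2 := hCS
      _ = N * ∑ f ∈ F, ∑ g ∈ F, (((Sf f) ∩ (Sf g)).card : ℝ) := by rw [hsum_c2]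
      _ ≤ N * (m + (α / 5) * (k - 1) * m) := by
          have hN0 : 0 ≤ N := by linarith
          exact mul_le_mul_of_nonneg_left hoff hN0
  have hmN : m ≤ N * (1 + (α / 5) * (k - 1)) := by
    have h := hchain
    have : m * m ≤ (N * (1 + (α / 5) * (k - 1))) * m := by nlinarith
    exact le_of_mul_le_mul_right this hm_pos
  have hfin : α * N * k ≤ N * (1 + (α / 5) * (k - 1)) := le_trans hm_ge hmN
  have hNpos : 0 < N := by linarith
  have : α * k ≤ 1 + (α / 5) * (k - 1) := by
    have := (mul_le_mul_iff_right₀ hNpos).1 (by linarith [hfin] : N * (α * k) ≤ N * (1 + (α / 5) * (k - 1)))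
    exact this
  rw [le_div_iff₀ hα0]
  nlinarith

open Classical in
/-- Deterministic covering form of the generic list-decodable mean estimation upper bound. -/
theorem stmt_0 (n : ℕ) (hn : 0 < n) (α u : ℝ) (hα0 : 0 < α) (hα : α < 1 / 2)
    (hu : 0 < u) (T : Finset (EuclideanSpace ℝ (Fin n))) (hT : T.Nonempty) :
    ∃ F : Finset (EuclideanSpace ℝ (Fin n)), (F.card : ℝ) ≤ 5 / α ∧
      ∀ μ : EuclideanSpace ℝ (Fin n),
        (∃ S ⊆ T, α * (T.card : ℝ) ≤ (S.card : ℝ) ∧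
          ∀ v : EuclideanSpace ℝ (Fin n), ‖v‖ = 1 →
            ((S.filter fun x => u ≤ |(inner ℝ v (x - μ) : ℝ)|).card : ℝ) ≤ (α / 10) * (S.card : ℝ)) →
        ∃ f ∈ F, ‖f - μ‖ ≤ 2 * u := by
  set P : ℕ → Prop := fun j => ∃ F : Finset (EuclideanSpace ℝ (Fin n)),
    (∀ f ∈ F, IsGood α u T f) ∧
    (∀ f ∈ F, ∀ g ∈ F, f ≠ g → 2 * u < ‖f - g‖) ∧ F.card = j with hP
  have hcardbd : ∀ F : Finset (EuclideanSpace ℝ (Fin n)),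
      (∀ f ∈ F, IsGood α u T f) →
      (∀ f ∈ F, ∀ g ∈ F, f ≠ g → 2 * u < ‖f - g‖) → F.card ≤ ⌊5 / α⌋₊ := by
    intro F h1 h2
    have := sep_card hα0 hu hT F h1 (fun f hf g hg hne => (h2 f hf g hg hne).le)
    exact Nat.le_floor this
  set B : ℕ := ⌊5 / α⌋₊ with hB
  have hP0 : P 0 := ⟨∅, by simp, by simp, rfl⟩
  set j : ℕ := Nat.findGreatest P B with hj
  have hPj : P j := Nat.findGreatest_spec (Nat.zero_le B) hP0
  obtain ⟨F, hFgood, hFsep, hFcard⟩ := hPj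
  refine ⟨F, ?_, ?_⟩
  · have h1 := hcardbd F hFgood hFsep
    have h2 : (F.card : ℝ) ≤ (⌊5 / α⌋₊ : ℝ) := by exact_mod_cast h1
    have h3 : ((⌊5 / α⌋₊ : ℕ) : ℝ) ≤ 5 / α := Nat.floor_le (by positivity)
    linarith
  · intro μ hμ
    by_contra hcon
    push_neg at hcon
    have hμnotin : μ ∉ F := by
      intro h
      have := hcon μ h
      rw [sub_self, norm_zero] at this
      linarith
    set F' : Finset (EuclideanSpace ℝ (Fin n)) := insert μ F with hF'
    have hF'good : ∀ f ∈ F', IsGood α u T f := by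
      intro f hf
      rcases Finset.mem_insert.1 hf with rfl | hf
      · exact hμ
      · exact hFgood f hf
    have hF'sep : ∀ f ∈ F', ∀ g ∈ F', f ≠ g → 2 * u < ‖f - g‖ := by
      intro f hf g hg hne
      rcases Finset.mem_insert.1 hf with rfl | hf1
      · rcases Finset.mem_insert.1 hg with rfl | hg1
        · exact absurd rfl hne
        · rw [norm_sub_rev]; exact hcon g hg1
      · rcases Finset.mem_insert.1 hg with rfl | hg1
        · exact hcon f hf1
        · exact hFsep f hf1 g hg1 hne
    have hF'card : F'.card = j + 1 := by
      rw [hF', Finset.card_insert_of_notMem hμnotin, hFcard]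
    have hle : j + 1 ≤ B := hF'card ▸ hcardbd F' hF'good hF'sep
    have : j + 1 ≤ j := Nat.le_findGreatest hle ⟨F', hF'good, hF'sep, hF'card⟩
    omega
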